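/- If G = (V, E) is a graph that does not contain the complete bipartite graph K_{r,s} (with 1 ≤ r ≤ s) as a subgraph, then |E| ≤ c_s · |V|^{2 - 1/r}, where c_s is a constant depending only on s. -/

import Mathlib

open Finset

-- Step 1: common neighborhood of an r-set has at most s-1 vertices
lemma step1 {V : Type} [Fintype V] [DecidableEq V] (G : SimpleGraph V) [DecidableRel G.Adj]
    (r s : ℕ) (hs : 1 ≤ s)
    (h : ¬ ∃ (A B : Finset V), Disjoint A B ∧ A.card = r ∧ B.card = s ∧
      ∀ a ∈ A, ∀ b ∈ B, G.Adj a b)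
    (T : Finset V) (hT : T.card = r) :
    (univ.filter fun v => T ⊆ G.neighborFinset v).card ≤ s - 1 := by
  by_contra hc
  push_neg at hc
  have hsle : s ≤ (univ.filter fun v => T ⊆ G.neighborFinset v).card := by omega
  obtain ⟨B, hBsub, hBcard⟩ := Finset.exists_subset_card_eq hsle
  apply h
  refine ⟨T, B, ?_, hT, hBcard, ?_⟩
  · rw [Finset.disjoint_left]
    intro a haT haB
    have := hBsub haB
    rw [mem_filter] at this
    exact G.irrefl (G.mem_neighborFinset a a |>.mp (this.2 haT))
  · intro a haT b hbB
    have := hBsub hbB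
    rw [mem_filter] at this
    exact (G.mem_neighborFinset b a |>.mp (this.2 haT)).symm

-- Step 2: double counting
lemma step2 {V : Type} [Fintype V] [DecidableEq V] (G : SimpleGraph V) [DecidableRel G.Adj]
    (r s : ℕ) (hs : 1 ≤ s)
    (h : ¬ ∃ (A B : Finset V), Disjoint A B ∧ A.card = r ∧ B.card = s ∧
      ∀ a ∈ A, ∀ b ∈ B, G.Adj a b) :
    ∑ v, (G.degree v).choose r ≤ (s - 1) * (Fintype.card V).choose r := by
  have key : ∀ v : V, (G.degree v).choose r =
      ((univ.powersetCard r : Finset (Finset V)).filter (fun T => T ⊆ G.neighborFinset v)).card := by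
    intro v
    rw [SimpleGraph.degree, ← Finset.card_powersetCard]
    congr 1
    ext T
    simp only [mem_powersetCard, mem_filter, subset_univ, true_and]
    tauto
  calc ∑ v, (G.degree v).choose r
      = ∑ v, ∑ T ∈ (univ.powersetCard r : Finset (Finset V)),
          (if T ⊆ G.neighborFinset v then 1 else 0) := by
        simp only [key, Finset.card_filter]
    _ = ∑ T ∈ (univ.powersetCard r : Finset (Finset V)), ∑ v : V,
          (if T ⊆ G.neighborFinset v then 1 else 0) := Finset.sum_comm
    _ ≤ ∑ T ∈ (univ.powersetCard r : Finset (Finset V)), (s - 1) := by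
        apply Finset.sum_le_sum
        intro T hT
        rw [mem_powersetCard] at hT
        rw [← Finset.card_filter]
        exact step1 G r s hs h T hT.2
    _ = (Fintype.card V).choose r * (s-1) := by
        rw [Finset.sum_const, smul_eq_mul, Finset.card_powersetCard, card_univ]
    _ = (s - 1) * (Fintype.card V).choose r := mul_comm _ _

-- Step 3: (d - r)^r ≤ r! * choose d r
lemma step3 (d r : ℕ) : (d - r) ^ r ≤ r.factorial * d.choose r := by
  rw [← Nat.descFactorial_eq_factorial_mul_choose, Nat.descFactorial_eq_prod_range]
  calc (d - r) ^ r = ∏ _i ∈ Finset.range r, (d - r) := by rw [Finset.prod_const, Finset.card_range]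
    _ ≤ ∏ i ∈ Finset.range r, (d - i) := ?_
  apply Finset.prod_le_prod'
  intro i hi
  rw [Finset.mem_range] at hi
  omega

/-- Kővári–Sós–Turán: a graph with no `K_{r,s}` (with `1 ≤ r ≤ s`) has at most
`c_s * |V|^(2 - 1/r)` edges, where `c_s` depends only on `s`. -/
theorem stmt0 (s : ℕ) :
    ∃ c : ℝ, 0 < c ∧ ∀ (r : ℕ), 1 ≤ r → r ≤ s →
      ∀ (V : Type) [Fintype V] (G : SimpleGraph V) [DecidableRel G.Adj],
        (¬ ∃ (A B : Finset V), Disjoint A B ∧ A.card = r ∧ B.card = s ∧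
            ∀ a ∈ A, ∀ b ∈ B, G.Adj a b) →
        (G.edgeFinset.card : ℝ) ≤ c * (Fintype.card V : ℝ) ^ ((2 : ℝ) - 1 / (r : ℝ)) := by
  classical
  refine ⟨(s : ℝ) + 1, by positivity, ?_⟩
  intro r hr1 hrs V _ G _ h
  have hs1 : 1 ≤ s := hr1.trans hrs
  set n := Fintype.card V with hn
  set E : ℝ := (2 : ℝ) - 1 / (r : ℝ) with hE
  have hrR : (1:ℝ) ≤ (r:ℝ) := by exact_mod_cast hr1
  have hrne : (r:ℝ) ≠ 0 := by positivity
  have hinv : 1 / (r:ℝ) ≤ 1 := by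
    rw [div_le_one (by positivity)]; exact hrR
  have hinv0 : 0 < 1 / (r:ℝ) := by positivity
  have hE1 : (1:ℝ) ≤ E := by rw [hE]; linarith
  have hE0 : (0:ℝ) < E := by linarith
  by_cases hn0 : n = 0
  · have hV : IsEmpty V := Fintype.card_eq_zero_iff.mp hn0
    have : G.edgeFinset = ∅ := Finset.eq_empty_of_isEmpty _
    rw [this]
    simp only [Finset.card_empty, Nat.cast_zero]
    positivity
  · have hn1 : 1 ≤ n := by omega
    have hnR : (1:ℝ) ≤ (n:ℝ) := by exact_mod_cast hn1
    have hnR0 : (0:ℝ) < (n:ℝ) := by linarith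
    -- natural number counting
    have hnat : ∑ v, (G.degree v - r) ^ r ≤ (s - 1) * n ^ r := by
      calc ∑ v, (G.degree v - r) ^ r
          ≤ ∑ v, r.factorial * (G.degree v).choose r :=
            Finset.sum_le_sum fun v _ => step3 _ _
        _ = r.factorial * ∑ v, (G.degree v).choose r := by rw [Finset.mul_sum]
        _ ≤ r.factorial * ((s - 1) * n.choose r) :=
            Nat.mul_le_mul_left _ (step2 G r s hs1 h)
        _ = (s - 1) * (r.factorial * n.choose r) := by ring
        _ = (s - 1) * n.descFactorial r := by rw [Nat.descFactorial_eq_factorial_mul_choose]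
        _ ≤ (s - 1) * n ^ r := Nat.mul_le_mul_left _ (Nat.descFactorial_le_pow _ _)
    set x : V → ℝ := fun v => ((G.degree v - r : ℕ) : ℝ) with hxdef
    have hx0 : ∀ v, 0 ≤ x v := fun v => Nat.cast_nonneg _
    set S : ℝ := ∑ v, x v with hSdef
    have hS0 : 0 ≤ S := Finset.sum_nonneg fun v _ => hx0 v
    have hPsum : ∑ v, x v ^ r ≤ (s : ℝ) * (n : ℝ) ^ r := by
      have h1 : (((∑ v, (G.degree v - r) ^ r : ℕ)) : ℝ) ≤ (((s - 1) * n ^ r : ℕ) : ℝ) := by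
        exact_mod_cast hnat
      push_cast at h1
      refine h1.trans ?_
      have : ((s - 1 : ℕ) : ℝ) ≤ (s : ℝ) := by
        have : (s - 1 : ℕ) ≤ s := by omega
        exact_mod_cast this
      apply mul_le_mul_of_nonneg_right this (by positivity)
    have hch := pow_sum_div_card_le_sum_pow (s := Finset.univ) (f := x)
      (fun i _ => hx0 i) (r - 1)
    rw [Nat.sub_add_cancel hr1, Finset.card_univ, ← hn, ← hSdef] at hch
    have hSr : S ^ r ≤ (s : ℝ) * (n : ℝ) ^ (2 * r - 1) := by
      have h2 : S ^ r ≤ (∑ v, x v ^ r) * (n:ℝ) ^ (r - 1) := by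
        rw [← div_le_iff₀ (by positivity)]
        exact hch
      calc S ^ r ≤ (∑ v, x v ^ r) * (n:ℝ) ^ (r - 1) := h2
        _ ≤ (s : ℝ) * (n : ℝ) ^ r * (n:ℝ) ^ (r - 1) := by
            apply mul_le_mul_of_nonneg_right hPsum (by positivity)
        _ = (s : ℝ) * (n : ℝ) ^ (2 * r - 1) := by
            rw [mul_assoc, ← pow_add]
            congr 2
            omega
    have hSle : S ≤ (s : ℝ) * (n : ℝ) ^ E := by
      have hrw : S = (S ^ r) ^ (1 / (r:ℝ)) := by
        rw [← Real.rpow_natCast S r, ← Real.rpow_mul hS0, mul_one_div, div_self hrne,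
          Real.rpow_one]
      rw [hrw]
      calc (S ^ r) ^ (1 / (r:ℝ))
          ≤ ((s : ℝ) * (n : ℝ) ^ (2 * r - 1)) ^ (1 / (r:ℝ)) :=
            Real.rpow_le_rpow (by positivity) hSr (le_of_lt hinv0)
        _ = (s:ℝ) ^ (1 / (r:ℝ)) * ((n : ℝ) ^ (2 * r - 1)) ^ (1 / (r:ℝ)) :=
            Real.mul_rpow (by positivity) (by positivity)
        _ = (s:ℝ) ^ (1 / (r:ℝ)) * (n : ℝ) ^ E := by
            congr 1
            rw [← Real.rpow_natCast (n:ℝ) (2 * r - 1), ← Real.rpow_mul (le_of_lt hnR0)]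
            congr 1
            have hcast : ((2 * r - 1 : ℕ) : ℝ) = 2 * (r:ℝ) - 1 := by
              have : 1 ≤ 2 * r := by omega
              push_cast [Nat.cast_sub this]
              ring
            rw [hcast, hE]
            field_simp
        _ ≤ (s : ℝ) * (n : ℝ) ^ E := by
            apply mul_le_mul_of_nonneg_right _ (Real.rpow_nonneg (le_of_lt hnR0) _)
            calc (s:ℝ) ^ (1 / (r:ℝ)) ≤ (s:ℝ) ^ (1:ℝ) :=
                  Real.rpow_le_rpow_of_exponent_le (by exact_mod_cast hs1) hinv
              _ = (s:ℝ) := Real.rpow_one _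
    -- degree sum
    have hdeg : (2 : ℝ) * G.edgeFinset.card = ∑ v, (G.degree v : ℝ) := by
      have := G.sum_degrees_eq_twice_card_edges
      exact_mod_cast this.symm
    have hdle : ∀ v, (G.degree v : ℝ) ≤ x v + r := by
      intro v
      have h3 : G.degree v ≤ (G.degree v - r) + r := by omega
      simp only [hxdef]
      exact_mod_cast h3
    have hnE : (n : ℝ) ≤ (n : ℝ) ^ E := by
      calc (n:ℝ) = (n:ℝ) ^ (1:ℝ) := (Real.rpow_one _).symm
        _ ≤ (n:ℝ) ^ E := Real.rpow_le_rpow_of_exponent_le hnR hE1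
    have hfinal : (2 : ℝ) * G.edgeFinset.card ≤ 2 * ((s : ℝ) * (n : ℝ) ^ E) := by
      calc (2 : ℝ) * G.edgeFinset.card = ∑ v, (G.degree v : ℝ) := hdeg
        _ ≤ ∑ v, (x v + r) := Finset.sum_le_sum fun v _ => hdle v
        _ = S + n * r := by
            rw [Finset.sum_add_distrib, Finset.sum_const, Finset.card_univ, ← hn, ← hSdef,
              nsmul_eq_mul]
        _ ≤ (s : ℝ) * (n : ℝ) ^ E + (n:ℝ) * r := add_le_add_left hSle _
        _ ≤ (s : ℝ) * (n : ℝ) ^ E + (s : ℝ) * (n : ℝ) ^ E := by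
            apply add_le_add_right
            calc (n:ℝ) * r ≤ (n:ℝ) ^ E * (s:ℝ) := by
                  apply mul_le_mul hnE (by exact_mod_cast hrs) (by positivity)
                  exact Real.rpow_nonneg (le_of_lt hnR0) _
              _ = (s : ℝ) * (n : ℝ) ^ E := mul_comm _ _
        _ = 2 * ((s : ℝ) * (n : ℝ) ^ E) := by ring
    have hmain : (G.edgeFinset.card : ℝ) ≤ (s : ℝ) * (n : ℝ) ^ E := by linarith
    refine hmain.trans ?_
    apply mul_le_mul_of_nonneg_right _ (Real.rpow_nonneg (le_of_lt hnR0) _)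
    linarith
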